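/- Let f : (ℤ/mℤ)^n → ℚ be an n-cocycle of the Yang–Baxter cochain complex of the cyclic biquandle C_m (i.e. δ^n f = 0). Then f is cohomologous to the average of its shifts: there exists an (n−1)-cochain g : (ℤ/mℤ)^{n−1} → ℚ with δ^{n−1} g = f − (1/m)·Σ_{i=0}^{m−1} S^i f, where S^i f(x_1,…,x_n) = f(x_1−i,…,x_n−i). -/

import Mathlib

/-- The `i`-th left face map of the set-theoretic Yang–Baxter (co)chain complex of the
cyclic biquandle `C_m = ℤ/mℤ` (with `R(a,b) = (b+1, a-1)`): it drops the `i`-th coordinate,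
subtracting `1` from all earlier coordinates. -/
def dl (m n : ℕ) (i : Fin (n + 1)) (x : Fin (n + 1) → ZMod m) : Fin n → ZMod m :=
  fun j => if (j : ℕ) < (i : ℕ) then x j.castSucc - 1 else x j.succ

/-- The `i`-th right face map: it drops the `i`-th coordinate, adding `1` to all later
coordinates. -/
def dr (m n : ℕ) (i : Fin (n + 1)) (x : Fin (n + 1) → ZMod m) : Fin n → ZMod m :=
  fun j => if (j : ℕ) < (i : ℕ) then x j.castSucc else x j.succ + 1

/-- The Yang–Baxter coboundary `δⁿ` of the cyclic biquandle `C_m` with coefficients in an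
abelian group `A`:
`(δⁿ f)(x₁,…,x_{n+1}) = Σᵢ (−1)^{i−1} [f(x₁−1,…,x_{i−1}−1,x_{i+1},…) − f(x₁,…,x_{i−1},x_{i+1}+1,…)]`. -/
def delta {A : Type*} [AddCommGroup A] (m n : ℕ) (f : (Fin n → ZMod m) → A) :
    (Fin (n + 1) → ZMod m) → A :=
  fun x => ∑ i : Fin (n + 1), (-1 : ℤ) ^ (i : ℕ) • (f (dl m n i x) - f (dr m n i x))

/-- The diagonal shift operator `S` on cochains: `(Sf)(x₁,…,x_k) = f(x₁−1,…,x_k−1)`. -/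
def shiftC {A : Type*} (m k : ℕ) (f : (Fin k → ZMod m) → A) : (Fin k → ZMod m) → A :=
  fun x => f fun j => x j - 1

-- face map / snoc compatibility
lemma dl_castSucc (m n : ℕ) (i : Fin (n+1)) (x : Fin (n+1) → ZMod m) (c : ZMod m) :
    dl m (n+1) i.castSucc (Fin.snoc x c) = Fin.snoc (dl m n i x) c := by
  funext j
  refine Fin.lastCases ?_ (fun k => ?_) j
  · have : ¬ ((Fin.last n : Fin (n+1)) : ℕ) < (i.castSucc : ℕ) := by
      simp [Fin.lt_def]; omega
    simp only [dl, this, if_false, Fin.succ_last, Fin.snoc_last]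
  · simp only [dl, Fin.coe_castSucc, Fin.snoc_castSucc, Fin.succ_castSucc]

lemma dr_castSucc (m n : ℕ) (i : Fin (n+1)) (x : Fin (n+1) → ZMod m) (c : ZMod m) :
    dr m (n+1) i.castSucc (Fin.snoc x c) = Fin.snoc (dr m n i x) (c+1) := by
  funext j
  refine Fin.lastCases ?_ (fun k => ?_) j
  · have : ¬ ((Fin.last n : Fin (n+1)) : ℕ) < (i.castSucc : ℕ) := by
      simp [Fin.lt_def]; omega
    simp only [dr, this, if_false, Fin.succ_last, Fin.snoc_last]
  · simp only [dr, Fin.coe_castSucc, Fin.snoc_castSucc, Fin.succ_castSucc]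

lemma dl_last (m n : ℕ) (x : Fin (n+1) → ZMod m) (c : ZMod m) :
    dl m (n+1) (Fin.last (n+1)) (Fin.snoc x c) = fun j => x j - 1 := by
  funext j
  have : ((j : Fin (n+1)) : ℕ) < ((Fin.last (n+1)) : ℕ) := by
    simp [j.is_le]
  simp [dl, this, not_lt.mpr j.is_le]

lemma dr_last (m n : ℕ) (x : Fin (n+1) → ZMod m) (c : ZMod m) :
    dr m (n+1) (Fin.last (n+1)) (Fin.snoc x c) = x := by
  funext j
  have : ((j : Fin (n+1)) : ℕ) < ((Fin.last (n+1)) : ℕ) := by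
    simp [j.is_le]
  simp [dr, this, not_lt.mpr j.is_le]

-- shift commutes with faces
lemma dl_shift (m n : ℕ) (i : Fin (n+1)) (x : Fin (n+1) → ZMod m) :
    dl m n i (fun j => x j - 1) = fun j => dl m n i x j - 1 := by
  funext j; simp only [dl]; split <;> ring

lemma dr_shift (m n : ℕ) (i : Fin (n+1)) (x : Fin (n+1) → ZMod m) :
    dr m n i (fun j => x j - 1) = fun j => dr m n i x j - 1 := by
  funext j; simp only [dr]; split <;> ring

lemma delta_shift (m n : ℕ) (g : (Fin n → ZMod m) → ℚ) :
    delta m n (shiftC m n g) = shiftC m (n+1) (delta m n g) := by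
  funext x
  simp only [delta, shiftC]
  refine Finset.sum_congr rfl fun i _ => ?_
  rw [dl_shift, dr_shift]

lemma delta_add (m n : ℕ) (f g : (Fin n → ZMod m) → ℚ) :
    delta m n (f + g) = delta m n f + delta m n g := by
  funext x
  simp only [delta, Pi.add_apply, ← Finset.sum_add_distrib]
  refine Finset.sum_congr rfl fun i _ => ?_
  rw [← smul_add]; congr 1; abel

lemma delta_smul (m n : ℕ) (a : ℚ) (f : (Fin n → ZMod m) → ℚ) :
    delta m n (a • f) = a • delta m n f := by
  funext x
  simp only [delta, Pi.smul_apply, smul_eq_mul, Finset.mul_sum]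
  refine Finset.sum_congr rfl fun i _ => ?_
  simp only [zsmul_eq_mul]
  ring

-- diagonal translation by i
def Tsh (m k : ℕ) (i : ℕ) (f : (Fin k → ZMod m) → ℚ) : (Fin k → ZMod m) → ℚ :=
  fun x => f fun j => x j - (i : ZMod m)

lemma Tsh_zero (m k : ℕ) (f : (Fin k → ZMod m) → ℚ) : Tsh m k 0 f = f := by
  funext x; simp [Tsh]

lemma Tsh_succ (m k : ℕ) (i : ℕ) (f : (Fin k → ZMod m) → ℚ) :
    Tsh m k (i+1) f = Tsh m k i (shiftC m k f) := by
  funext x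
  simp only [Tsh, shiftC]
  congr 1; funext j; push_cast; ring

lemma delta_Tsh (m n : ℕ) (i : ℕ) (g : (Fin n → ZMod m) → ℚ) :
    delta m n (Tsh m n i g) = Tsh m (n+1) i (delta m n g) := by
  induction i generalizing g with
  | zero => rw [Tsh_zero, Tsh_zero]
  | succ k ih =>
      rw [Tsh_succ, Tsh_succ, ih, delta_shift]

lemma delta_sum {ι : Type*} (m n : ℕ) (s : Finset ι) (F : ι → (Fin n → ZMod m) → ℚ) :
    delta m n (∑ i ∈ s, F i) = ∑ i ∈ s, delta m n (F i) :=
  map_sum (AddMonoidHom.mk' (delta m n) (delta_add m n)) _ _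


/-- an `n`-cocycle `f` (with rational coefficients) of the Yang–Baxter cochain
complex of the cyclic biquandle `C_m` is cohomologous to the average of its shifts:
there is an `(n−1)`-cochain `g` with `δg = f − (1/m)·Σ_{i=0}^{m−1} Sⁱf`.
(The `n`-cochains, `n ≥ 1`, are realized as degree `n+1`-cochains with `n : ℕ` arbitrary.) -/
theorem cocycle_cohomologous_to_shift_average (m n : ℕ) (hm : 1 ≤ m)
    (f : (Fin (n + 1) → ZMod m) → ℚ) (hf : delta m (n + 1) f = 0) :
    ∃ g : (Fin n → ZMod m) → ℚ,
      delta m n g =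
        f - fun x => (m : ℚ)⁻¹ * ∑ i ∈ Finset.range m, f fun j => x j - (i : ZMod m) := by
  haveI : NeZero m := ⟨by omega⟩
  have hm0 : (m : ℚ) ≠ 0 := Nat.cast_ne_zero.mpr (by omega)
  -- Step 1: expand δf at (x, c)
  have hsnoc : ∀ (x : Fin (n+1) → ZMod m) (c : ZMod m),
      (∑ i : Fin (n+1), (-1:ℤ)^(i:ℕ) •
          (f (Fin.snoc (dl m n i x) c) - f (Fin.snoc (dr m n i x) (c+1))))
        + (-1:ℤ)^(n+1) • (f (fun j => x j - 1) - f x) = 0 := by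
    intro x c
    have h0 : delta m (n+1) f (Fin.snoc x c) = 0 := by rw [hf]; rfl
    rw [delta, Fin.sum_univ_castSucc] at h0
    simpa [dl_castSucc, dr_castSucc, dl_last, dr_last] using h0
  -- Step 2: the cochain G and its coboundary
  set G : (Fin n → ZMod m) → ℚ := ∑ c : ZMod m, (fun y => f (Fin.snoc y c)) with hGdef
  have hdG : delta m n G = ∑ c : ZMod m, delta m n (fun y => f (Fin.snoc y c)) :=
    delta_sum m n _ _
  have e2 : ∀ (y : Fin n → ZMod m),
      (∑ c : ZMod m, f (Fin.snoc y (c+1))) = ∑ c : ZMod m, f (Fin.snoc y c) :=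
    fun y => Fintype.sum_equiv (Equiv.addRight (1 : ZMod m)) _ _ (fun c => rfl)
  have hGx : ∀ x, delta m n G x = (-1:ℚ)^(n+1) * m * (f x - f (fun j => x j - 1)) := by
    intro x
    have h4 : ∑ c : ZMod m, (∑ i : Fin (n+1), (-1:ℤ)^(i:ℕ) •
          (f (Fin.snoc (dl m n i x) c) - f (Fin.snoc (dr m n i x) (c+1))))
        = delta m n G x := by
      have key : ∀ c : ZMod m, delta m n (fun y => f (Fin.snoc y c)) x
          = ∑ i : Fin (n+1), (-1:ℤ)^(i:ℕ) •
              (f (Fin.snoc (dl m n i x) c) - f (Fin.snoc (dr m n i x) c)) := fun c => rfl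
      calc (∑ c : ZMod m, ∑ i : Fin (n+1), (-1:ℤ)^(i:ℕ) •
              (f (Fin.snoc (dl m n i x) c) - f (Fin.snoc (dr m n i x) (c+1))))
          = ∑ i : Fin (n+1), ∑ c : ZMod m, (-1:ℤ)^(i:ℕ) •
              (f (Fin.snoc (dl m n i x) c) - f (Fin.snoc (dr m n i x) (c+1))) :=
            Finset.sum_comm
        _ = ∑ i : Fin (n+1), ∑ c : ZMod m, (-1:ℤ)^(i:ℕ) •
              (f (Fin.snoc (dl m n i x) c) - f (Fin.snoc (dr m n i x) c)) := by
            refine Finset.sum_congr rfl fun i _ => ?_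
            rw [← Finset.smul_sum, ← Finset.smul_sum]
            congr 1
            rw [Finset.sum_sub_distrib, Finset.sum_sub_distrib, e2 (dr m n i x)]
        _ = ∑ c : ZMod m, ∑ i : Fin (n+1), (-1:ℤ)^(i:ℕ) •
              (f (Fin.snoc (dl m n i x) c) - f (Fin.snoc (dr m n i x) c)) :=
            Finset.sum_comm
        _ = delta m n G x := by
            rw [hdG, Finset.sum_apply]
            exact Finset.sum_congr rfl fun c _ => (key c).symm
    have h3 : (∑ c : ZMod m, ((∑ i : Fin (n+1), (-1:ℤ)^(i:ℕ) •
          (f (Fin.snoc (dl m n i x) c) - f (Fin.snoc (dr m n i x) (c+1))))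
        + (-1:ℤ)^(n+1) • (f (fun j => x j - 1) - f x))) = 0 :=
      Finset.sum_eq_zero fun c _ => hsnoc x c
    rw [Finset.sum_add_distrib, h4, Finset.sum_const, Finset.card_univ, ZMod.card] at h3
    have := h3
    simp only [zsmul_eq_mul, nsmul_eq_mul, Int.cast_pow, Int.cast_neg, Int.cast_one] at this ⊢
    nlinarith [this, sq_nonneg ((-1:ℚ)^(n+1))]
  -- Step 3: g₀ with δg₀ = f - Sf
  set g₀ : (Fin n → ZMod m) → ℚ := ((-1:ℚ)^(n+1) * (m:ℚ)⁻¹) • G with hg₀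
  have hdg₀ : ∀ x, delta m n g₀ x = f x - f (fun j => x j - 1) := by
    intro x
    rw [hg₀, delta_smul]
    have hs : (-1:ℚ)^(n+1) * (-1:ℚ)^(n+1) = 1 := by
      rw [← pow_add]; exact Even.neg_one_pow ⟨n+1, by ring⟩
    simp only [Pi.smul_apply, smul_eq_mul, hGx x]
    field_simp
    linear_combination (f x - f (fun j => x j - 1)) * hs
  -- Step 4: telescoping
  set F : ℕ → ((Fin (n+1) → ZMod m) → ℚ) := fun k => Tsh m (n+1) k f with hF
  have hstep : ∀ k, delta m n (Tsh m n k g₀) = F k - F (k+1) := by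
    intro k
    rw [delta_Tsh]
    funext x
    show delta m n g₀ (fun j => x j - (k : ZMod m)) = F k x - F (k+1) x
    rw [hdg₀]
    simp only [hF, Tsh]
    congr 2
    funext j; push_cast; ring
  refine ⟨(m:ℚ)⁻¹ • ∑ i ∈ Finset.range m, ∑ k ∈ Finset.range i, Tsh m n k g₀, ?_⟩
  rw [delta_smul]
  have hsum : delta m n (∑ i ∈ Finset.range m, ∑ k ∈ Finset.range i, Tsh m n k g₀)
      = ∑ i ∈ Finset.range m, (F 0 - F i) := by
    rw [delta_sum]
    refine Finset.sum_congr rfl fun i _ => ?_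
    rw [delta_sum]
    simp only [hstep]
    exact Finset.sum_range_sub' F i
  rw [hsum]
  funext x
  simp only [Pi.smul_apply, Pi.sub_apply, Finset.sum_apply, smul_eq_mul,
    Finset.sum_sub_distrib, Finset.sum_const, Finset.card_range]
  have hF0 : F 0 x = f x := by simp [hF, Tsh]
  have hFi : ∀ i, F i x = f fun j => x j - (i : ZMod m) := fun i => rfl
  simp only [hF0]
  rw [mul_sub]
  congr 1
  · rw [nsmul_eq_mul, ← mul_assoc, inv_mul_cancel₀ hm0, one_mul]
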